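/- If λ is a t-core partition of length at most tn+1, then the Frobenius rank of λ equals max(n_0(λ) - n - 1, 0) plus the sum over i from 1 to t-1 of max(n_i(λ) - n, 0), where n_i(λ) is the number of parts of β(λ, tn+1) congruent to i mod t. -/
import Mathlib


open Finset

/-- `l` is a partition of length at most `m`: antitone with all parts beyond `m` zero. -/
def PartLen (l : ℕ → ℕ) (m : ℕ) : Prop := Antitone l ∧ ∀ i, m ≤ i → l i = 0

/-- The beta-set `β(λ, m)` with parts `λ_i + m - i` (1-indexed), as a finset. -/
def betaSet (l : ℕ → ℕ) (m : ℕ) : Finset ℕ := (Finset.range m).image (fun i => l i + (m - 1 - i))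

/-- `n_i(λ)`: number of parts of the beta-set `β(λ, m)` congruent to `i` modulo `t`. -/
def nP (l : ℕ → ℕ) (m t : ℕ) (i : ℤ) : ℕ :=
  ((Finset.range m).filter
    (fun j => ((l j + (m - 1 - j) : ℕ) : ℤ) % (t : ℤ) = i % (t : ℤ))).card

/-- Macdonald's beta-set of the `t`-core of `λ`: the numbers `t*j + i` for `j < n_i(λ)`. -/
def coreBetaSet (l : ℕ → ℕ) (m t : ℕ) : Finset ℕ :=
  (Finset.range t).biUnion (fun i => (Finset.range (nP l m t i)).image (fun j => t * j + i))

/-- `λ` is a `t`-core iff its beta-set is already the beta-set of its `t`-core. -/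
def IsTCore (l : ℕ → ℕ) (m t : ℕ) : Prop := betaSet l m = coreBetaSet l m t

/-- The `t`-core of `λ` (with `m` beta-numbers), via Macdonald's construction. -/
def tCore (l : ℕ → ℕ) (m t : ℕ) : ℕ → ℕ := fun i =>
  if i < m then ((coreBetaSet l m t).sort (· ≤ ·)).getD (m - 1 - i) 0 - (m - 1 - i) else 0

/-- Part `j+1` of the conjugate partition of `l` (length at most `m`). -/
def conj (l : ℕ → ℕ) (m j : ℕ) : ℕ := ((Finset.range m).filter (fun i => j + 1 ≤ l i)).card

/-- The Frobenius rank: the number of `i` with `λ_i ≥ i` (1-indexed). -/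
def frobRank (l : ℕ → ℕ) (m : ℕ) : ℕ := ((Finset.range m).filter (fun i => i + 1 ≤ l i)).card

/-- First Frobenius coordinate `α_{j+1} = λ_{j+1} - (j+1)`. -/
def fA (l : ℕ → ℕ) (j : ℕ) : ℤ := (l j : ℤ) - (j + 1)

/-- Second Frobenius coordinate `β_{j+1} = λ'_{j+1} - (j+1)`. -/
def fB (l : ℕ → ℕ) (m j : ℕ) : ℤ := (conj l m j : ℤ) - (j + 1)

/-- `λ` is `(z₁, z₂, k)`-asymmetric: in Frobenius coordinates,
`λ = (α_1,…,α_r | α_1+z₁, …, (α_k+z₁ omitted), …, α_r+z₁, z₂)`; for `k = 0` no part is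
omitted and no part (`z₂`) is added. -/
def IsAsym (l : ℕ → ℕ) (m : ℕ) (z1 z2 : ℤ) (k : ℕ) : Prop :=
  k ≤ frobRank l m ∧
  (if k = 0 then ∀ j < frobRank l m, fB l m j = fA l j + z1
   else (∀ j : ℕ, j + 1 < k → fB l m j = fA l j + z1) ∧
        (∀ j : ℕ, k ≤ j + 1 → j + 2 ≤ frobRank l m → fB l m j = fA l (j + 1) + z1) ∧
        1 ≤ frobRank l m ∧ fB l m (frobRank l m - 1) = z2)

/-- rank of a `t`-core of length at most `tn+1`. -/
theorem frobRank_tcore_tn_add_one (t n : ℕ) (ht : 2 ≤ t) (hn : 1 ≤ n) (l : ℕ → ℕ)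
    (hl : PartLen l (t * n + 1)) (hcore : IsTCore l (t * n + 1) t) :
    frobRank l (t * n + 1) =
      (nP l (t * n + 1) t 0 - (n + 1)) +
        ∑ i ∈ Finset.Icc 1 (t - 1), (nP l (t * n + 1) t (i : ℕ) - n) := by
  have ht0 : 0 < t := by omega
  set m := t * n + 1 with hm
  set f : ℕ → ℕ := fun i => l i + (m - 1 - i) with hf
  have hinj : Set.InjOn f (Finset.range m : Set ℕ) := by
    intro a ha b hb hab
    simp only [Finset.coe_range, Set.mem_Iio] at ha hb
    by_contra hne
    rcases Nat.lt_or_ge a b with h | h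
    · have := hl.1 h.le
      simp only [hf] at hab
      omega
    · have hba : b < a := by omega
      have := hl.1 hba.le
      simp only [hf] at hab
      omega
  -- Step 1: frobRank as the number of beta-numbers ≥ m
  have h1 : frobRank l m = ((betaSet l m).filter (fun x => m ≤ x)).card := by
    rw [betaSet, Finset.filter_image,
      Finset.card_image_of_injOn (hinj.mono (by
        intro x hx
        simp only [Finset.coe_filter, Set.mem_setOf_eq] at hx
        simpa using hx.1))]
    unfold frobRank
    congr 1
    apply Finset.filter_congr
    intro i hi
    simp only [Finset.mem_range] at hi
    constructor <;> intro h <;> omega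
  -- injectivity of j ↦ t*j + i
  have hinj2 : ∀ i : ℕ, ∀ a b : ℕ, t * a + i = t * b + i → a = b := by
    intro i a b hab
    have h2 : t * a = t * b := by omega
    exact Nat.eq_of_mul_eq_mul_left ht0 h2
  have hmod : ∀ i j : ℕ, i < t → (t * j + i) % t = i := by
    intro i j hi
    rw [Nat.mul_add_mod]
    exact Nat.mod_eq_of_lt hi
  -- counting lemma
  have hcard : ∀ i c N : ℕ, (∀ j, m ≤ t * j + i ↔ c ≤ j) →
      (((Finset.range N).image (fun j => t * j + i)).filter (fun x => m ≤ x)).card = N - c := by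
    intro i c N hiff
    rw [Finset.filter_image, Finset.card_image_of_injOn]
    · have heq : (Finset.range N).filter (fun j => m ≤ t * j + i) = Finset.Ico c N := by
        ext j
        simp only [Finset.mem_filter, Finset.mem_range, Finset.mem_Ico, hiff j]
        omega
      rw [heq, Nat.card_Ico]
    · intro a _ b _ hab
      exact hinj2 i a b hab
  -- disjointness of the biUnion pieces
  have hdisj : ∀ i ∈ Finset.range t, ∀ j ∈ Finset.range t, i ≠ j →
      Disjoint (((Finset.range (nP l m t i)).image (fun k => t * k + i)).filter (fun x => m ≤ x))
        (((Finset.range (nP l m t j)).image (fun k => t * k + j)).filter (fun x => m ≤ x)) := by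
    intro i hi j hj hij
    simp only [Finset.mem_range] at hi hj
    rw [Finset.disjoint_left]
    intro x hx hx'
    simp only [Finset.mem_filter, Finset.mem_image, Finset.mem_range] at hx hx'
    obtain ⟨⟨a, _, ha⟩, _⟩ := hx
    obtain ⟨⟨b, _, hb⟩, _⟩ := hx'
    have h1 : x % t = i := ha ▸ hmod i a hi
    have h2 : x % t = j := hb ▸ hmod j b hj
    omega
  rw [h1, hcore, coreBetaSet, Finset.filter_biUnion, Finset.card_biUnion hdisj]
  -- split off i = 0
  have hsplit : Finset.range t = insert 0 (Finset.Icc 1 (t - 1)) := by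
    ext i
    simp only [Finset.mem_range, Finset.mem_insert, Finset.mem_Icc]
    omega
  rw [hsplit, Finset.sum_insert (by simp)]
  congr 1
  · push_cast
    apply hcard 0 (n + 1)
    intro j
    constructor
    · intro h
      by_contra hc
      push_neg at hc
      have hle : t * j ≤ t * n := Nat.mul_le_mul_left t (by omega)
      omega
    · intro h
      have hle : t * (n + 1) ≤ t * j := Nat.mul_le_mul_left t h
      have he : t * (n + 1) = t * n + t := by ring
      omega
  · apply Finset.sum_congr rfl
    intro i hi
    simp only [Finset.mem_Icc] at hi
    apply hcard i n
    intro j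
    constructor
    · intro h
      by_contra hc
      push_neg at hc
      have hle : t * (j + 1) ≤ t * n := Nat.mul_le_mul_left t (by omega)
      have he : t * (j + 1) = t * j + t := by ring
      omega
    · intro h
      have hle : t * n ≤ t * j := Nat.mul_le_mul_left t h
      omega
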